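/- Let A(e)^{-1} := (1/(2⟨e, v-v'⟩²))·[e·(v-v')ᵀ] - (1/⟨e, v-v'⟩)·I_d for e ∈ ℝ^d with ⟨e, v-v'⟩ ≠ 0. Then the row vector obtained by applying the divergence with respect to e to each column of A(e)^{-1} equals (d/2)·(v-v')ᵀ/⟨e, v-v'⟩². -/

import Mathlib

open Matrix

lemma aux_fderiv (d : ℕ) (w e : Fin d → ℝ) (hc : e ⬝ᵥ w ≠ 0) (i j : Fin d) :
    fderiv ℝ
        (fun x : Fin d → ℝ =>
          x i * w j / (2 * (x ⬝ᵥ w) ^ 2)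
            - (if i = j then (1 : ℝ) else 0) / (x ⬝ᵥ w)) e (Pi.single i 1)
      = w j / (2 * (e ⬝ᵥ w) ^ 2) - e i * w i * w j / (e ⬝ᵥ w) ^ 3
          + (if i = j then (1 : ℝ) else 0) * w i / (e ⬝ᵥ w) ^ 2 := by
  set c : ℝ := e ⬝ᵥ w with hcdef
  set δ : ℝ := if i = j then (1 : ℝ) else 0 with hδ
  set D : (Fin d → ℝ) →L[ℝ] ℝ :=
    ∑ k, w k • (ContinuousLinearMap.proj k : (Fin d → ℝ) →L[ℝ] ℝ) with hD
  have hdot : HasFDerivAt (fun x : Fin d → ℝ => x ⬝ᵥ w) D e := by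
    have h1 : (fun x : Fin d → ℝ => x ⬝ᵥ w) = fun x => ∑ k, x k * w k := by
      funext x; simp [dotProduct]
    rw [h1, hD]
    exact HasFDerivAt.fun_sum fun k _ => (hasFDerivAt_apply k e).mul_const (w k)
  have hnum : HasFDerivAt (fun x : Fin d → ℝ => x i * w j)
      (w j • (ContinuousLinearMap.proj i : (Fin d → ℝ) →L[ℝ] ℝ)) e :=
    (hasFDerivAt_apply i e).mul_const (w j)
  have hdne : 2 * c ^ 2 ≠ 0 := by positivity
  have hg1 : HasDerivAt (fun t : ℝ => (2 * t ^ 2)⁻¹)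
      (-(2 * (2 * c ^ 1)) / (2 * c ^ 2) ^ 2) c :=
    ((hasDerivAt_pow 2 c).const_mul 2).inv hdne
  have hcomp1 : HasFDerivAt (fun x : Fin d → ℝ => (2 * (x ⬝ᵥ w) ^ 2)⁻¹)
      ((-(2 * (2 * c ^ 1)) / (2 * c ^ 2) ^ 2) • D) e := by
    have := hg1.comp_hasFDerivAt e hdot; exact this
  have hfull1 := hnum.fun_mul hcomp1
  have hg2 : HasDerivAt (fun t : ℝ => t⁻¹) (-(c ^ 2)⁻¹) c := hasDerivAt_inv hc
  have hcomp2 : HasFDerivAt (fun x : Fin d → ℝ => (x ⬝ᵥ w)⁻¹)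
      ((-(c ^ 2)⁻¹) • D) e := hg2.comp_hasFDerivAt e hdot
  have hsec := hcomp2.const_mul δ
  have htot := hfull1.fun_sub hsec
  have hfun : (fun x : Fin d → ℝ =>
          x i * w j / (2 * (x ⬝ᵥ w) ^ 2) - δ / (x ⬝ᵥ w))
      = fun x : Fin d → ℝ =>
          x i * w j * (2 * (x ⬝ᵥ w) ^ 2)⁻¹ - δ * (x ⬝ᵥ w)⁻¹ := by
    funext x; rw [div_eq_mul_inv, div_eq_mul_inv]
  rw [hfun, htot.fderiv]
  have hDval : D (Pi.single i 1) = w i := by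
    simp [hD, Pi.single_apply, Finset.sum_ite_eq', mul_comm]
  simp only [ContinuousLinearMap.sub_apply, ContinuousLinearMap.add_apply,
    ContinuousLinearMap.smul_apply, hDval, ContinuousLinearMap.proj_apply,
    smul_eq_mul, Pi.single_eq_same]
  rw [← hcdef]
  field_simp
  ring

theorem stmt_2 (d : ℕ) (hd : 1 ≤ d) (v v' e : Fin d → ℝ)
    (hc : e ⬝ᵥ (v - v') ≠ 0) (j : Fin d) :
    ∑ i, fderiv ℝ
        (fun x : Fin d → ℝ =>
          x i * (v - v') j / (2 * (x ⬝ᵥ (v - v')) ^ 2)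
            - (if i = j then (1 : ℝ) else 0) / (x ⬝ᵥ (v - v'))) e (Pi.single i 1)
      = (d : ℝ) / 2 * (v - v') j / (e ⬝ᵥ (v - v')) ^ 2 := by
  set w := v - v' with hw
  have h1 : ∀ i, fderiv ℝ
        (fun x : Fin d → ℝ =>
          x i * w j / (2 * (x ⬝ᵥ w) ^ 2)
            - (if i = j then (1 : ℝ) else 0) / (x ⬝ᵥ w)) e (Pi.single i 1)
      = w j / (2 * (e ⬝ᵥ w) ^ 2) - e i * w i * w j / (e ⬝ᵥ w) ^ 3
          + (if i = j then (1 : ℝ) else 0) * w i / (e ⬝ᵥ w) ^ 2 :=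
    fun i => aux_fderiv d w e hc i j
  simp only [h1]
  rw [Finset.sum_add_distrib, Finset.sum_sub_distrib]
  have h2 : ∑ i : Fin d, (if i = j then (1:ℝ) else 0) * w i / (e ⬝ᵥ w) ^ 2
      = w j / (e ⬝ᵥ w) ^ 2 := by
    simp [ite_mul, ite_div, Finset.sum_ite_eq']
  have h3 : ∑ i : Fin d, e i * w i * w j / (e ⬝ᵥ w) ^ 3
      = (e ⬝ᵥ w) * w j / (e ⬝ᵥ w) ^ 3 := by
    rw [← Finset.sum_div, ← Finset.sum_mul]
    rfl
  have h4 : ∑ i : Fin d, w j / (2 * (e ⬝ᵥ w) ^ 2) = d * (w j / (2 * (e ⬝ᵥ w) ^ 2)) := by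
    simp [Finset.sum_const, Finset.card_univ]
  rw [h2, h3, h4]
  field_simp
  ring
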